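/- (Theorem 1.) Let a solution of the Kowalevski equations in two constant fields on an interval satisfy M₁² + M₂² ≠ 0 and M_α M₂ − M_β M₁ = 0 identically on that interval. Then the function S = −(M_α M₁ + M_β M₂)/(M₁² + M₂²) is constant on the interval, and, denoting its constant value by s, one has M_α = −s·M₁ and M_β = −s·M₂ identically; in particular the ratios M_α/M₁ and M_β/M₂ are constant and equal to each other wherever M₁ ≠ 0 and M₂ ≠ 0. -/

import Mathlib

theorem my_const_of_hasDerivAt_zero {I : Set ℝ} (hI : Convex ℝ I) {f : ℝ → ℝ}
    (hf : ∀ t ∈ I, HasDerivAt f 0 t) {x y : ℝ} (hx : x ∈ I) (hy : y ∈ I) : f x = f y := by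
  have H := hI.norm_image_sub_le_of_norm_hasFDerivWithin_le (C := 0)
    (f' := fun _ => (ContinuousLinearMap.smulRight (1 : ℝ →L[ℝ] ℝ) (0 : ℝ)))
    (fun t ht => (hf t ht).hasFDerivAt.hasFDerivWithinAt)
    (fun t ht => by simp) hy hx
  have : ‖f x - f y‖ ≤ 0 := by simpa using H
  have := norm_le_zero_iff.mp this
  linarith [sub_eq_zero.mp this]

/-- Theorem 1 -/
theorem stmt_1
    (I : Set ℝ) (hI : I.OrdConnected)
    (ω₁ ω₂ ω₃ α₁ α₂ α₃ β₁ β₂ β₃ : ℝ → ℝ)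
    (hω₁ : ∀ t ∈ I, HasDerivAt ω₁ ((ω₂ t * ω₃ t + β₃ t) / 2) t)
    (hω₂ : ∀ t ∈ I, HasDerivAt ω₂ ((-(ω₁ t * ω₃ t) - α₃ t) / 2) t)
    (hω₃ : ∀ t ∈ I, HasDerivAt ω₃ (α₂ t - β₁ t) t)
    (hα₁ : ∀ t ∈ I, HasDerivAt α₁ (α₂ t * ω₃ t - α₃ t * ω₂ t) t)
    (hα₂ : ∀ t ∈ I, HasDerivAt α₂ (α₃ t * ω₁ t - α₁ t * ω₃ t) t)
    (hα₃ : ∀ t ∈ I, HasDerivAt α₃ (α₁ t * ω₂ t - α₂ t * ω₁ t) t)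
    (hβ₁ : ∀ t ∈ I, HasDerivAt β₁ (β₂ t * ω₃ t - β₃ t * ω₂ t) t)
    (hβ₂ : ∀ t ∈ I, HasDerivAt β₂ (β₃ t * ω₁ t - β₁ t * ω₃ t) t)
    (hβ₃ : ∀ t ∈ I, HasDerivAt β₃ (β₁ t * ω₂ t - β₂ t * ω₁ t) t)
    (M₁ M₂ Mα Mβ S : ℝ → ℝ)
    (hM₁ : M₁ = fun t => 2 * ω₁ t)
    (hM₂ : M₂ = fun t => 2 * ω₂ t)
    (hMα : Mα = fun t => 2 * ω₁ t * α₁ t + 2 * ω₂ t * α₂ t + ω₃ t * α₃ t)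
    (hMβ : Mβ = fun t => 2 * ω₁ t * β₁ t + 2 * ω₂ t * β₂ t + ω₃ t * β₃ t)
    (hS : S = fun t => -(Mα t * M₁ t + Mβ t * M₂ t) / (M₁ t ^ 2 + M₂ t ^ 2))
    (hne : ∀ t ∈ I, M₁ t ^ 2 + M₂ t ^ 2 ≠ 0)
    (hrel : ∀ t ∈ I, Mα t * M₂ t - Mβ t * M₁ t = 0) :
    ∃ s : ℝ,
      (∀ t ∈ I, S t = s) ∧
      (∀ t ∈ I, Mα t = -s * M₁ t ∧ Mβ t = -s * M₂ t) ∧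
      (∀ t ∈ I, M₁ t ≠ 0 → M₂ t ≠ 0 → Mα t / M₁ t = -s ∧ Mβ t / M₂ t = -s) := by
  -- pointwise values of M's
  have eM₁ : ∀ t, M₁ t = 2 * ω₁ t := fun t => by rw [hM₁]
  have eM₂ : ∀ t, M₂ t = 2 * ω₂ t := fun t => by rw [hM₂]
  have eMα : ∀ t, Mα t = 2 * ω₁ t * α₁ t + 2 * ω₂ t * α₂ t + ω₃ t * α₃ t := fun t => by rw [hMα]
  have eMβ : ∀ t, Mβ t = 2 * ω₁ t * β₁ t + 2 * ω₂ t * β₂ t + ω₃ t * β₃ t := fun t => by rw [hMβ]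
  -- S has zero derivative on I
  have hS0 : ∀ t ∈ I, HasDerivAt S 0 t := by
    intro t ht
    have HM₁ : HasDerivAt M₁ (2 * ((ω₂ t * ω₃ t + β₃ t) / 2)) t := by
      have h : HasDerivAt (fun t => 2 * ω₁ t) (2 * ((ω₂ t * ω₃ t + β₃ t) / 2)) t :=
        (hω₁ t ht).const_mul 2
      rwa [← hM₁] at h
    have HM₂ : HasDerivAt M₂ (2 * ((-(ω₁ t * ω₃ t) - α₃ t) / 2)) t := by
      have h : HasDerivAt (fun t => 2 * ω₂ t) (2 * ((-(ω₁ t * ω₃ t) - α₃ t) / 2)) t :=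
        (hω₂ t ht).const_mul 2
      rwa [← hM₂] at h
    have HMα : HasDerivAt Mα
        (2 * ((ω₂ t * ω₃ t + β₃ t) / 2) * α₁ t + 2 * ω₁ t * (α₂ t * ω₃ t - α₃ t * ω₂ t)
          + (2 * ((-(ω₁ t * ω₃ t) - α₃ t) / 2) * α₂ t + 2 * ω₂ t * (α₃ t * ω₁ t - α₁ t * ω₃ t))
          + ((α₂ t - β₁ t) * α₃ t + ω₃ t * (α₁ t * ω₂ t - α₂ t * ω₁ t))) t := by
      have h : HasDerivAt (fun t => 2 * ω₁ t * α₁ t + 2 * ω₂ t * α₂ t + ω₃ t * α₃ t)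
          (2 * ((ω₂ t * ω₃ t + β₃ t) / 2) * α₁ t + 2 * ω₁ t * (α₂ t * ω₃ t - α₃ t * ω₂ t)
            + (2 * ((-(ω₁ t * ω₃ t) - α₃ t) / 2) * α₂ t + 2 * ω₂ t * (α₃ t * ω₁ t - α₁ t * ω₃ t))
            + ((α₂ t - β₁ t) * α₃ t + ω₃ t * (α₁ t * ω₂ t - α₂ t * ω₁ t))) t :=
        ((((hω₁ t ht).const_mul 2).mul (hα₁ t ht)).add
          (((hω₂ t ht).const_mul 2).mul (hα₂ t ht))).add ((hω₃ t ht).mul (hα₃ t ht))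
      rwa [← hMα] at h
    have HMβ : HasDerivAt Mβ
        (2 * ((ω₂ t * ω₃ t + β₃ t) / 2) * β₁ t + 2 * ω₁ t * (β₂ t * ω₃ t - β₃ t * ω₂ t)
          + (2 * ((-(ω₁ t * ω₃ t) - α₃ t) / 2) * β₂ t + 2 * ω₂ t * (β₃ t * ω₁ t - β₁ t * ω₃ t))
          + ((α₂ t - β₁ t) * β₃ t + ω₃ t * (β₁ t * ω₂ t - β₂ t * ω₁ t))) t := by
      have h : HasDerivAt (fun t => 2 * ω₁ t * β₁ t + 2 * ω₂ t * β₂ t + ω₃ t * β₃ t)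
          (2 * ((ω₂ t * ω₃ t + β₃ t) / 2) * β₁ t + 2 * ω₁ t * (β₂ t * ω₃ t - β₃ t * ω₂ t)
            + (2 * ((-(ω₁ t * ω₃ t) - α₃ t) / 2) * β₂ t + 2 * ω₂ t * (β₃ t * ω₁ t - β₁ t * ω₃ t))
            + ((α₂ t - β₁ t) * β₃ t + ω₃ t * (β₁ t * ω₂ t - β₂ t * ω₁ t))) t :=
        ((((hω₁ t ht).const_mul 2).mul (hβ₁ t ht)).add
          (((hω₂ t ht).const_mul 2).mul (hβ₂ t ht))).add ((hω₃ t ht).mul (hβ₃ t ht))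
      rwa [← hMβ] at h
    have HN := (HMα.mul HM₁).add (HMβ.mul HM₂)
    have HD := (HM₁.pow 2).add (HM₂.pow 2)
    have hD0 := hne t ht
    have h := HN.neg.div HD hD0
    rw [hS]
    convert h using 1
    all_goals try rfl
    rw [eq_comm, div_eq_zero_iff]
    left
    have hR := hrel t ht
    rw [eM₁, eM₂, eMα, eMβ] at hR ⊢
    simp only [Pi.add_apply, Pi.pow_apply, Pi.mul_apply, Pi.neg_apply, eM₁, eM₂, eMα, eMβ]
    push_cast
    linear_combination (-2 * ω₁ t ^ 2 * ω₃ t - 4 * ω₁ t * α₃ t - 2 * ω₂ t ^ 2 * ω₃ t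
      - 4 * ω₂ t * β₃ t) * hR
  rcases I.eq_empty_or_nonempty with h | ⟨t₀, ht₀⟩
  · exact ⟨0, by simp [h]⟩
  · refine ⟨S t₀, fun t ht => my_const_of_hasDerivAt_zero hI.convex hS0 ht ht₀, ?_, ?_⟩
    · intro t ht
      have hSt : S t = S t₀ := my_const_of_hasDerivAt_zero hI.convex hS0 ht ht₀
      have hD0 := hne t ht
      nth_rewrite 1 [hS] at hSt
      simp only at hSt
      rw [div_eq_iff hD0] at hSt
      have h2 := hrel t ht
      constructor
      · have hz : (Mα t + S t₀ * M₁ t) * (M₁ t ^ 2 + M₂ t ^ 2) = 0 := by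
          linear_combination (-(M₁ t)) * hSt + M₂ t * h2
        rcases mul_eq_zero.mp hz with hz | hz
        · linarith
        · exact absurd hz hD0
      · have hz : (Mβ t + S t₀ * M₂ t) * (M₁ t ^ 2 + M₂ t ^ 2) = 0 := by
          linear_combination (-(M₂ t)) * hSt - M₁ t * h2
        rcases mul_eq_zero.mp hz with hz | hz
        · linarith
        · exact absurd hz hD0
    · intro t ht h1 h2
      have hSt : S t = S t₀ := my_const_of_hasDerivAt_zero hI.convex hS0 ht ht₀
      have hD0 := hne t ht
      nth_rewrite 1 [hS] at hSt
      simp only at hSt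
      rw [div_eq_iff hD0] at hSt
      have hR := hrel t ht
      constructor
      · rw [div_eq_iff h1]
        have hz : (Mα t + S t₀ * M₁ t) * (M₁ t ^ 2 + M₂ t ^ 2) = 0 := by
          linear_combination (-(M₁ t)) * hSt + M₂ t * hR
        rcases mul_eq_zero.mp hz with hz | hz
        · linarith
        · exact absurd hz hD0
      · rw [div_eq_iff h2]
        have hz : (Mβ t + S t₀ * M₂ t) * (M₁ t ^ 2 + M₂ t ^ 2) = 0 := by
          linear_combination (-(M₂ t)) * hSt - M₁ t * hR
        rcases mul_eq_zero.mp hz with hz | hz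
        · linarith
        · exact absurd hz hD0
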